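/- For any completely positive trace-decreasing (CPTD) map E on density operators, and any two density operators ρ and σ with t(E|ρ) := Tr(E[ρ]) > 0 and t(E|σ) := Tr(E[σ]) > 0, the sine distance C(ρ,σ) := √(1 − F(ρ,σ)) satisfies C(ρ,σ) ≥ t(E|ρ) · C(E[ρ]/t(E|ρ), E[σ]/t(E|σ)), where F is the Uhlmann fidelity. -/

import Mathlib

open Matrix Kronecker MeasureTheory ComplexOrder

noncomputable section

def msqrt {α : Type*} [Fintype α] [DecidableEq α] (A : Matrix α α ℂ) : Matrix α α ℂ :=
  open scoped Classical in
  if h : A.PosSemidef then (h.1.eigenvectorUnitary : Matrix α α ℂ) *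
    diagonal ((↑) ∘ (√·) ∘ h.1.eigenvalues) * (star h.1.eigenvectorUnitary : Matrix α α ℂ) else 0

def fid {α : Type*} [Fintype α] [DecidableEq α] (ρ σ : Matrix α α ℂ) : ℝ :=
  ((msqrt (msqrt ρ * σ * msqrt ρ)).trace).re ^ 2

def sineDist {α : Type*} [Fintype α] [DecidableEq α] (ρ σ : Matrix α α ℂ) : ℝ :=
  Real.sqrt (1 - fid ρ σ)

def traceDist {α : Type*} [Fintype α] [DecidableEq α] (ρ σ : Matrix α α ℂ) : ℝ :=
  (1/2) * ((msqrt ((ρ - σ)ᴴ * (ρ - σ))).trace).re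

def IsDensity {α : Type*} [Fintype α] (ρ : Matrix α α ℂ) : Prop :=
  ρ.PosSemidef ∧ ρ.trace = 1

def IsPureState {α : Type*} [Fintype α] (ρ : Matrix α α ℂ) : Prop :=
  IsDensity ρ ∧ ∃ ψ : α → ℂ, ρ = Matrix.vecMulVec ψ (star ψ)

def tr' {α : Type*} [Fintype α] (A : Matrix α α ℂ) : ℝ := A.trace.re

def nstate {α : Type*} [Fintype α] (ρ : Matrix α α ℂ) : Matrix α α ℂ :=
  (((tr' ρ : ℝ) : ℂ))⁻¹ • ρ

def IsCPTD {α β : Type*} [Fintype α] [Fintype β] [DecidableEq α] [DecidableEq β]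
    (E : Matrix α α ℂ →ₗ[ℂ] Matrix β β ℂ) : Prop :=
  ∃ (k : ℕ) (K : Fin k → Matrix β α ℂ),
    (∀ ρ, E ρ = ∑ i, K i * ρ * (K i)ᴴ) ∧ (1 - ∑ i, (K i)ᴴ * K i).PosSemidef

def IsCPTP {α β : Type*} [Fintype α] [Fintype β] [DecidableEq α] [DecidableEq β]
    (E : Matrix α α ℂ →ₗ[ℂ] Matrix β β ℂ) : Prop :=
  ∃ (k : ℕ) (K : Fin k → Matrix β α ℂ),
    (∀ ρ, E ρ = ∑ i, K i * ρ * (K i)ᴴ) ∧ (∑ i, (K i)ᴴ * K i = 1)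

def tensId {α β γ : Type*} [Fintype α]
    (E : Matrix α α ℂ → Matrix β β ℂ)
    (ρ : Matrix (α × γ) (α × γ) ℂ) : Matrix (β × γ) (β × γ) ℂ :=
  Matrix.of fun p q => E (Matrix.of fun a b => ρ (a, p.2) (b, q.2)) p.1 q.1

def maxEnt (d : ℕ) : Matrix (Fin d × Fin d) (Fin d × Fin d) ℂ :=
  Matrix.of fun p q => if p.1 = p.2 ∧ q.1 = q.2 then ((d : ℂ))⁻¹ else 0

def ptraceSnd {α β : Type*} [Fintype β] (ρ : Matrix (α × β) (α × β) ℂ) : Matrix α α ℂ :=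
  Matrix.of fun a b => ∑ j, ρ (a, j) (b, j)

def ptraceFst {α β : Type*} [Fintype α] (ρ : Matrix (α × β) (α × β) ℂ) : Matrix β β ℂ :=
  Matrix.of fun i j => ∑ a, ρ (a, i) (a, j)

def choiSine {m n : ℕ} (E₁ E₂ : Matrix (Fin m) (Fin m) ℂ →ₗ[ℂ] Matrix (Fin n) (Fin n) ℂ) : ℝ :=
  sineDist (nstate (tensId (⇑E₁) (maxEnt m))) (nstate (tensId (⇑E₂) (maxEnt m)))

def diamondSine {m n : ℕ} (E₁ E₂ : Matrix (Fin m) (Fin m) ℂ →ₗ[ℂ] Matrix (Fin n) (Fin n) ℂ) : ℝ :=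
  sSup { x | ∃ ρ : Matrix (Fin m × Fin m) (Fin m × Fin m) ℂ, IsPureState ρ ∧
    tr' (tensId (⇑E₁) ρ) ≠ 0 ∧ tr' (tensId (⇑E₂) ρ) ≠ 0 ∧
    x = sineDist (nstate (tensId (⇑E₁) ρ)) (nstate (tensId (⇑E₂) ρ)) }

set_option linter.unusedSectionVars false

namespace EPI

variable {n : Type*} [Fintype n] [DecidableEq n]

/-- quadratic form value is nonneg real -/
lemma dot_self_nonneg (x : n → ℂ) : 0 ≤ star x ⬝ᵥ x :=
  dotProduct_star_self_nonneg x

lemma dot_self_im (x : n → ℂ) : (star x ⬝ᵥ x).im = 0 := by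
  have h := dot_self_nonneg x
  rw [Complex.le_def] at h
  simpa using h.2.symm

lemma dot_self_re_nonneg (x : n → ℂ) : 0 ≤ (star x ⬝ᵥ x).re := by
  have h := dot_self_nonneg x
  rw [Complex.le_def] at h
  simpa using h.1

/-- Cauchy-Schwarz for the complex dot product. -/
lemma dot_cs (x y : n → ℂ) :
    ‖star x ⬝ᵥ y‖ ≤
      Real.sqrt (star x ⬝ᵥ x).re * Real.sqrt (star y ⬝ᵥ y).re := by
  have h := norm_inner_le_norm (𝕜 := ℂ) (WithLp.toLp 2 x : EuclideanSpace ℂ n) (WithLp.toLp 2 y)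
  rw [EuclideanSpace.inner_toLp_toLp, dotProduct_comm] at h
  have hx : ‖(WithLp.toLp 2 x : EuclideanSpace ℂ n)‖ = Real.sqrt (star x ⬝ᵥ x).re := by
    rw [norm_eq_sqrt_re_inner (𝕜 := ℂ), EuclideanSpace.inner_toLp_toLp, dotProduct_comm]
    rfl
  have hy : ‖(WithLp.toLp 2 y : EuclideanSpace ℂ n)‖ = Real.sqrt (star y ⬝ᵥ y).re := by
    rw [norm_eq_sqrt_re_inner (𝕜 := ℂ), EuclideanSpace.inner_toLp_toLp, dotProduct_comm]
    rfl
  rw [hx, hy] at h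
  exact h


variable {m p : Type*} [Fintype m] [DecidableEq m] [Fintype p] [DecidableEq p]

/-- `W` is a contraction. -/
def Con (W : Matrix m n ℂ) : Prop := (1 - Wᴴ * W).PosSemidef

lemma con_dot {W : Matrix m n ℂ} (hW : Con W) (x : n → ℂ) :
    (star (W *ᵥ x) ⬝ᵥ (W *ᵥ x)).re ≤ (star x ⬝ᵥ x).re := by
  have h := hW.dotProduct_mulVec_nonneg x
  rw [Complex.le_def] at h
  have h1 := h.1
  simp only [Matrix.sub_mulVec, Matrix.one_mulVec, dotProduct_sub, Complex.sub_re,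
    Complex.zero_re] at h1
  have hkey : star x ⬝ᵥ ((Wᴴ * W) *ᵥ x) = star (W *ᵥ x) ⬝ᵥ (W *ᵥ x) := by
    rw [← Matrix.mulVec_mulVec, Matrix.dotProduct_mulVec, Matrix.star_mulVec]
  rw [hkey] at h1
  linarith

lemma dot_self_re_eq_abs (y : n → ℂ) : (star y ⬝ᵥ y).re = ‖star y ⬝ᵥ y‖ := by
  rw [Complex.norm_def, Complex.normSq_apply, dot_self_im]
  rw [show (star y ⬝ᵥ y).re * (star y ⬝ᵥ y).re + 0 * 0 = ((star y ⬝ᵥ y).re)^2 by ring]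
  rw [Real.sqrt_sq (dot_self_re_nonneg y)]

lemma con_conjTranspose {W : Matrix m n ℂ} (hW : Con W) : Con Wᴴ := by
  rw [Con, Matrix.conjTranspose_conjTranspose]
  refine Matrix.PosSemidef.of_dotProduct_mulVec_nonneg ?_ ?_
  · exact Matrix.isHermitian_one.sub (Matrix.isHermitian_mul_conjTranspose_self W)
  · intro x
    have hval : star x ⬝ᵥ ((1 - W * Wᴴ) *ᵥ x) =
        star x ⬝ᵥ x - star (Wᴴ *ᵥ x) ⬝ᵥ (Wᴴ *ᵥ x) := by
      rw [Matrix.sub_mulVec, Matrix.one_mulVec, dotProduct_sub, ← Matrix.mulVec_mulVec,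
        Matrix.dotProduct_mulVec, Matrix.star_mulVec, Matrix.conjTranspose_conjTranspose]
    rw [hval]
    have h1 : star (Wᴴ *ᵥ x) ⬝ᵥ (Wᴴ *ᵥ x) = star (W *ᵥ (Wᴴ *ᵥ x)) ⬝ᵥ x := by
      simp [Matrix.dotProduct_mulVec, Matrix.star_mulVec, Matrix.vecMul_vecMul]
    have h2 : (star (Wᴴ *ᵥ x) ⬝ᵥ (Wᴴ *ᵥ x)).re = ‖star (W *ᵥ (Wᴴ *ᵥ x)) ⬝ᵥ x‖ := by
      rw [dot_self_re_eq_abs, h1]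
    have hcs : ‖star (W *ᵥ (Wᴴ *ᵥ x)) ⬝ᵥ x‖ ≤
        Real.sqrt (star (Wᴴ *ᵥ x) ⬝ᵥ (Wᴴ *ᵥ x)).re * Real.sqrt (star x ⬝ᵥ x).re :=
      calc ‖star (W *ᵥ (Wᴴ *ᵥ x)) ⬝ᵥ x‖
          ≤ Real.sqrt (star (W *ᵥ (Wᴴ *ᵥ x)) ⬝ᵥ (W *ᵥ (Wᴴ *ᵥ x))).re *
              Real.sqrt (star x ⬝ᵥ x).re := dot_cs _ _
        _ ≤ Real.sqrt (star (Wᴴ *ᵥ x) ⬝ᵥ (Wᴴ *ᵥ x)).re * Real.sqrt (star x ⬝ᵥ x).re := by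
            apply mul_le_mul_of_nonneg_right _ (Real.sqrt_nonneg _)
            exact Real.sqrt_le_sqrt (con_dot hW (Wᴴ *ᵥ x))
    have hyx : (star (Wᴴ *ᵥ x) ⬝ᵥ (Wᴴ *ᵥ x)).re ≤ (star x ⬝ᵥ x).re := by
      have ha2 := Real.mul_self_sqrt (dot_self_re_nonneg (Wᴴ *ᵥ x))
      have hb2 := Real.mul_self_sqrt (dot_self_re_nonneg x)
      nlinarith [Real.sqrt_nonneg (star (Wᴴ *ᵥ x) ⬝ᵥ (Wᴴ *ᵥ x)).re,
        Real.sqrt_nonneg (star x ⬝ᵥ x).re, h2, hcs]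
    rw [Complex.le_def]
    refine ⟨by simpa using hyx, by simp [dot_self_im]⟩

lemma con_mul {K : Matrix m n ℂ} {L : Matrix n p ℂ} (hK : Con K) (hL : Con L) :
    Con (K * L) := by
  have hid : (1 : Matrix p p ℂ) - (K * L)ᴴ * (K * L) =
      Lᴴ * (1 - Kᴴ * K) * L + (1 - Lᴴ * L) := by
    simp only [Matrix.conjTranspose_mul, Matrix.mul_sub, Matrix.sub_mul, Matrix.mul_one,
      Matrix.one_mul, Matrix.mul_assoc]
    abel
  rw [Con, hid]
  exact ((hK.conjTranspose_mul_mul_same L)).add hL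

lemma con_of_mul_eq_one {W : Matrix m n ℂ} (h : Wᴴ * W = 1) : Con W := by
  simp [Con, h, Matrix.PosSemidef.zero]

lemma con_diag_abs_le_one {N : Matrix n n ℂ} (hN : Con N) (i : n) :
    ‖N i i‖ ≤ 1 := by
  have he : N i i = star (Pi.single i 1) ⬝ᵥ (N *ᵥ (Pi.single i (1:ℂ))) := by
    simp [Matrix.mulVec_single, dotProduct, Pi.single_apply, apply_ite, mul_ite]
  have hq : (star (Pi.single i (1:ℂ)) ⬝ᵥ (Pi.single i (1:ℂ))).re = 1 := by
    simp [dotProduct, Pi.single_apply, apply_ite]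
  calc ‖N i i‖
      ≤ Real.sqrt (star (Pi.single i (1:ℂ)) ⬝ᵥ (Pi.single i (1:ℂ))).re *
        Real.sqrt (star (N *ᵥ Pi.single i 1) ⬝ᵥ (N *ᵥ Pi.single i (1:ℂ))).re := by
        rw [he]; exact dot_cs _ _
    _ ≤ 1 := by
        rw [hq, Real.sqrt_one, one_mul]
        rw [show (1:ℝ) = Real.sqrt 1 by simp]
        apply Real.sqrt_le_sqrt
        have := con_dot hN (Pi.single i (1:ℂ))
        rw [hq] at this
        simpa using this

section spectral

variable {T : Matrix n n ℂ} (hT : T.PosSemidef)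

/-- conjugated diagonal: apply `f` to the eigenvalues of `T` in its eigenbasis -/
def cd (f : ℝ → ℝ) : Matrix n n ℂ :=
  (hT.1.eigenvectorUnitary : Matrix n n ℂ) *
    Matrix.diagonal (fun i => (f (hT.1.eigenvalues i) : ℂ)) *
    (star (hT.1.eigenvectorUnitary : Matrix n n ℂ))

lemma cd_star_mul : (star (hT.1.eigenvectorUnitary : Matrix n n ℂ)) *
    (hT.1.eigenvectorUnitary : Matrix n n ℂ) = 1 :=
  Matrix.mem_unitaryGroup_iff'.mp (hT.1.eigenvectorUnitary).2

lemma cd_mul_star : (hT.1.eigenvectorUnitary : Matrix n n ℂ) *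
    (star (hT.1.eigenvectorUnitary : Matrix n n ℂ)) = 1 :=
  Matrix.mem_unitaryGroup_iff.mp (hT.1.eigenvectorUnitary).2

lemma conj_mul_conj {U sU : Matrix n n ℂ} (h : sU * U = 1) (D E : Matrix n n ℂ) :
    (U * D * sU) * (U * E * sU) = U * (D * E) * sU := by
  have h1 : U * D * sU * (U * E * sU) = U * D * (sU * U) * E * sU := by
    simp only [Matrix.mul_assoc]
  rw [h1, h, Matrix.mul_one, Matrix.mul_assoc U D E]

lemma cd_mul (f g : ℝ → ℝ) :
    cd hT f * cd hT g = cd hT (fun x => f x * g x) := by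
  unfold cd
  rw [conj_mul_conj (cd_star_mul hT), Matrix.diagonal_mul_diagonal]
  congr 2
  funext i
  push_cast
  ring

lemma cd_congr {f g : ℝ → ℝ} (h : ∀ i, f (hT.1.eigenvalues i) = g (hT.1.eigenvalues i)) :
    cd hT f = cd hT g := by
  unfold cd
  congr 2
  exact congrArg _ (funext fun i => by rw [h i])

lemma cd_conjTranspose (f : ℝ → ℝ) : (cd hT f)ᴴ = cd hT f := by
  unfold cd
  simp only [Matrix.conjTranspose_mul, Matrix.star_eq_conjTranspose,
    Matrix.conjTranspose_conjTranspose, Matrix.diagonal_conjTranspose]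
  rw [Matrix.mul_assoc]
  congr 1
  simp [Pi.star_def, Complex.star_def, Complex.conj_ofReal]

lemma cd_psd {f : ℝ → ℝ} (hf : ∀ i, 0 ≤ f (hT.1.eigenvalues i)) :
    (cd hT f).PosSemidef := by
  unfold cd
  rw [Matrix.star_eq_conjTranspose]
  apply Matrix.PosSemidef.mul_mul_conjTranspose_same
  rw [Matrix.posSemidef_diagonal_iff]
  intro i
  rw [Complex.le_def]
  simp [hf i]

lemma cd_one : cd hT (fun _ => 1) = 1 := by
  unfold cd
  simp only [Complex.ofReal_one, Matrix.diagonal_one, Matrix.mul_one]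
  exact cd_mul_star hT

lemma cd_zero : cd hT (fun _ => 0) = 0 := by
  unfold cd
  simp

lemma cd_id : cd hT id = T := by
  have := hT.1.spectral_theorem
  rw [Unitary.conjStarAlgAut_apply] at this
  unfold cd
  exact this.symm

lemma cd_trace (f : ℝ → ℝ) :
    (cd hT f).trace = ∑ i, (f (hT.1.eigenvalues i) : ℂ) := by
  unfold cd
  rw [Matrix.trace_mul_cycle, cd_star_mul hT, Matrix.one_mul, Matrix.trace_diagonal]

lemma cd_sqrt : cd hT Real.sqrt = cfc Real.sqrt T := by
  rw [Matrix.IsHermitian.cfc_eq hT.1 Real.sqrt, Matrix.IsHermitian.cfc, Unitary.conjStarAlgAut_apply]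
  rfl

end spectral

section msqrtl

variable {A B : Matrix n n ℂ}

lemma msqrt_eq (hA : A.PosSemidef) : msqrt A = cd hA Real.sqrt := by
  unfold msqrt
  rw [dif_pos hA]
  rfl

lemma msqrt_psd (hA : A.PosSemidef) : (msqrt A).PosSemidef := by
  rw [msqrt_eq hA]; exact cd_psd hA (fun i => Real.sqrt_nonneg _)

lemma msqrt_mul_self (hA : A.PosSemidef) : msqrt A * msqrt A = A := by
  rw [msqrt_eq hA, cd_mul, cd_congr hA (g := id) (fun i => Real.mul_self_sqrt (hA.eigenvalues_nonneg i)),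
    cd_id]

lemma msqrt_herm (hA : A.PosSemidef) : (msqrt A)ᴴ = msqrt A := (msqrt_psd hA).1

lemma msqrt_cd (hA : A.PosSemidef) : msqrt A = cd hA Real.sqrt := by
  rw [msqrt_eq hA]

lemma psd_diag_nonneg (hA : A.PosSemidef) (i : n) : 0 ≤ A i i := by
  have h := hA.dotProduct_mulVec_nonneg (Pi.single i 1)
  have he : star (Pi.single i 1) ⬝ᵥ (A *ᵥ (Pi.single i (1:ℂ))) = A i i := by
    simp [Matrix.mulVec_single, dotProduct, Pi.single_apply, apply_ite, mul_ite]
  rwa [he] at h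

lemma psd_trace_nonneg (hA : A.PosSemidef) : 0 ≤ A.trace :=
  Finset.sum_nonneg fun i _ => psd_diag_nonneg hA i

lemma psd_trace_re_nonneg (hA : A.PosSemidef) : 0 ≤ A.trace.re := by
  have := psd_trace_nonneg hA
  rw [Complex.le_def] at this
  simpa using this.1

lemma psd_trace_real (hA : A.PosSemidef) : A.trace = (A.trace.re : ℂ) := by
  have := psd_trace_nonneg hA
  rw [Complex.le_def] at this
  apply Complex.ext
  · simp
  · simpa using this.2.symm

lemma ofReal_nonneg {c : ℝ} (hc : 0 ≤ c) : (0:ℂ) ≤ (c:ℂ) := by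
  rw [Complex.le_def]; simp [hc]

lemma psd_smul {c : ℝ} (hc : 0 ≤ c) (hA : A.PosSemidef) : ((c:ℂ) • A).PosSemidef := by
  refine Matrix.PosSemidef.of_dotProduct_mulVec_nonneg ?_ ?_
  · rw [Matrix.IsHermitian, Matrix.conjTranspose_smul, hA.1]
    congr 1
    simp [Complex.star_def, Complex.conj_ofReal]
  · intro x
    rw [Matrix.smul_mulVec, dotProduct_smul, smul_eq_mul]
    exact mul_nonneg (ofReal_nonneg hc) (hA.dotProduct_mulVec_nonneg x)

lemma msqrt_smul {c : ℝ} (hc : 0 ≤ c) (hA : A.PosSemidef) :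
    msqrt ((c:ℂ) • A) = ((Real.sqrt c : ℝ) : ℂ) • msqrt A := by
  have hcA : ((c:ℂ) • A).PosSemidef := psd_smul hc hA
  have hB : (((Real.sqrt c : ℝ):ℂ) • msqrt A).PosSemidef :=
    psd_smul (Real.sqrt_nonneg c) (msqrt_psd hA)
  have hsq : (((Real.sqrt c : ℝ):ℂ) • msqrt A) ^ 2 = (c:ℂ) • A := by
    rw [pow_two, Matrix.smul_mul, Matrix.mul_smul, smul_smul, msqrt_mul_self hA,
      ← Complex.ofReal_mul, Real.mul_self_sqrt hc]
  rw [msqrt_eq hcA, cd_sqrt, msqrt_eq hA, cd_sqrt]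
  have hsa : IsSelfAdjoint A := hA.1
  rw [show ((c:ℂ) • A) = c • A from (RCLike.real_smul_eq_coe_smul (K := ℂ) c A).symm]
  rw [← cfc_comp_smul c Real.sqrt A]
  rw [show ((Real.sqrt c : ℝ) : ℂ) • cfc Real.sqrt A = Real.sqrt c • cfc Real.sqrt A from
    (RCLike.real_smul_eq_coe_smul (K := ℂ) _ _).symm]
  rw [← cfc_const_mul (Real.sqrt c) Real.sqrt A]
  apply cfc_congr
  intro x hx
  have hx0 : 0 ≤ x := by
    rw [hA.1.spectrum_real_eq_range_eigenvalues] at hx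
    obtain ⟨i, rfl⟩ := hx
    exact hA.eigenvalues_nonneg i
  simp only [smul_eq_mul]
  rw [Real.sqrt_mul hc]

/-- square root of the fidelity -/
def gFid (A B : Matrix n n ℂ) : ℝ := ((msqrt (msqrt A * B * msqrt A)).trace).re

lemma fid_eq_gFid_sq (A B : Matrix n n ℂ) : fid A B = (gFid A B) ^ 2 := rfl

lemma inner_psd (hA : A.PosSemidef) (hB : B.PosSemidef) :
    (msqrt A * B * msqrt A).PosSemidef := by
  have := hB.conjTranspose_mul_mul_same (msqrt A)
  rwa [msqrt_herm hA] at this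

lemma gFid_nonneg (hA : A.PosSemidef) (hB : B.PosSemidef) : 0 ≤ gFid A B :=
  psd_trace_re_nonneg (msqrt_psd (inner_psd hA hB))

lemma gFid_smul {c c' : ℝ} (hc : 0 ≤ c) (hc' : 0 ≤ c') (hA : A.PosSemidef)
    (hB : B.PosSemidef) :
    gFid ((c:ℂ) • A) ((c':ℂ) • B) = Real.sqrt c * Real.sqrt c' * gFid A B := by
  unfold gFid
  rw [msqrt_smul hc hA]
  have h1 : (((Real.sqrt c : ℝ):ℂ) • msqrt A) * ((c':ℂ) • B) * (((Real.sqrt c : ℝ):ℂ) • msqrt A)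
      = (((c * c' : ℝ)):ℂ) • (msqrt A * B * msqrt A) := by
    rw [Matrix.smul_mul, Matrix.mul_smul, Matrix.smul_mul, Matrix.mul_smul, smul_smul,
      Matrix.smul_mul, smul_smul]
    congr 1
    rw [← Complex.ofReal_mul, Real.mul_self_sqrt hc, ← Complex.ofReal_mul]
  rw [h1, msqrt_smul (mul_nonneg hc hc') (inner_psd hA hB), Matrix.trace_smul, smul_eq_mul,
    Complex.re_ofReal_mul, Real.sqrt_mul hc]

end msqrtl

section polar

lemma cd_sub {T : Matrix n n ℂ} (hT : T.PosSemidef) (f g : ℝ → ℝ) :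
    cd hT f - cd hT g = cd hT (fun x => f x - g x) := by
  unfold cd
  rw [← Matrix.sub_mul, ← Matrix.mul_sub, Matrix.diagonal_sub]
  congr 2
  funext i
  push_cast
  ring

/-- pseudo-inverse of sqrt, as a spectral function -/
def gsq : ℝ → ℝ := fun x => if Real.sqrt x = 0 then 0 else (Real.sqrt x)⁻¹

variable {m : Type*} [Fintype m] [DecidableEq m]

/-- contraction part of the polar decomposition `P = Wpol P * msqrt (Pᴴ * P)` -/
def Wpol (P : Matrix m n ℂ) : Matrix m n ℂ :=
  P * cd (Matrix.posSemidef_conjTranspose_mul_self P) gsq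

lemma wpol_mul_msqrt (P : Matrix m n ℂ) : Wpol P * msqrt (Pᴴ * P) = P := by
  set hA := Matrix.posSemidef_conjTranspose_mul_self P
  rw [Wpol, msqrt_cd hA, Matrix.mul_assoc, cd_mul]
  have hz : P * cd hA (fun x => gsq x * Real.sqrt x) - P = 0 := by
    have h1 : P * cd hA (fun x => gsq x * Real.sqrt x) - P =
        P * (cd hA (fun x => gsq x * Real.sqrt x) - cd hA (fun _ => 1)) := by
      rw [Matrix.mul_sub, cd_one, Matrix.mul_one]
    rw [h1]
    apply Matrix.conjTranspose_mul_self_eq_zero.mp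
    rw [Matrix.conjTranspose_mul, cd_sub hA, cd_conjTranspose]
    have h2 : cd hA (fun x => gsq x * Real.sqrt x - 1) * Pᴴ *
        (P * (cd hA (fun x => gsq x * Real.sqrt x - 1))) =
        cd hA (fun x => gsq x * Real.sqrt x - 1) * cd hA id *
          cd hA (fun x => gsq x * Real.sqrt x - 1) := by
      rw [cd_id hA]
      simp only [Matrix.mul_assoc]
    rw [h2, cd_mul, cd_mul]
    rw [cd_congr hA (g := fun _ => 0) ?_, cd_zero]
    intro i
    have hnn := hA.eigenvalues_nonneg i
    set x := hA.1.eigenvalues i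
    by_cases hx : x = 0
    · simp [hx]
    · have hs : Real.sqrt x ≠ 0 :=
        Real.sqrt_ne_zero'.mpr (lt_of_le_of_ne hnn (Ne.symm hx))
      simp [gsq, hs, inv_mul_cancel₀ hs]
  have := sub_eq_zero.mp hz
  linear_combination (norm := abel) this

lemma wpol_con (P : Matrix m n ℂ) : Con (Wpol P) := by
  set hA := Matrix.posSemidef_conjTranspose_mul_self P
  have hW : (Wpol P)ᴴ * Wpol P =
      cd hA (fun x => gsq x * id x * gsq x) := by
    rw [Wpol, Matrix.conjTranspose_mul, cd_conjTranspose]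
    have h2 : cd hA gsq * Pᴴ * (P * cd hA gsq) = cd hA gsq * cd hA id * cd hA gsq := by
      rw [cd_id hA]
      simp only [Matrix.mul_assoc]
    rw [h2, cd_mul, cd_mul]
  rw [Con, hW]
  have h1 : (1 : Matrix n n ℂ) - cd hA (fun x => gsq x * id x * gsq x) =
      cd hA (fun x => 1 - gsq x * id x * gsq x) := by
    rw [← cd_one hA, cd_sub hA]
  rw [h1]
  apply cd_psd
  intro i
  have hnn := hA.eigenvalues_nonneg i
  set x := hA.1.eigenvalues i
  by_cases hx : x = 0
  · simp [hx, gsq]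
  · have hxpos : 0 < x := lt_of_le_of_ne hnn (Ne.symm hx)
    have hs : Real.sqrt x ≠ 0 := Real.sqrt_ne_zero'.mpr hxpos
    have hgg : gsq x * x * gsq x = 1 := by
      simp only [gsq, if_neg hs]
      rw [show (Real.sqrt x)⁻¹ * x * (Real.sqrt x)⁻¹ = x / (Real.sqrt x * Real.sqrt x) by
        field_simp]
      rw [Real.mul_self_sqrt (le_of_lt hxpos), div_self hx]
    simp [hgg]

lemma wpol_conjTranspose_mul (P : Matrix m n ℂ) :
    (Wpol P)ᴴ * P = msqrt (Pᴴ * P) := by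
  set hA := Matrix.posSemidef_conjTranspose_mul_self P
  rw [Wpol, Matrix.conjTranspose_mul, cd_conjTranspose, Matrix.mul_assoc]
  have h2 : cd hA gsq * (Pᴴ * P) = cd hA gsq * cd hA id := by rw [cd_id hA]
  rw [h2, cd_mul, msqrt_cd hA]
  apply cd_congr
  intro i
  have hnn := hA.eigenvalues_nonneg i
  set x := hA.1.eigenvalues i
  by_cases hx : x = 0
  · simp [hx, gsq]
  · have hxpos : 0 < x := lt_of_le_of_ne hnn (Ne.symm hx)
    have hs : Real.sqrt x ≠ 0 := Real.sqrt_ne_zero'.mpr hxpos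
    simp only [gsq, if_neg hs, id]
    field_simp
    exact (Real.sq_sqrt hnn).symm

end polar

section core

variable {m : Type*} [Fintype m] [DecidableEq m]

lemma trace_diagonal_mul (d : n → ℂ) (M : Matrix n n ℂ) :
    (Matrix.diagonal d * M).trace = ∑ i, d i * M i i := by
  simp [Matrix.trace, Matrix.diag, Matrix.mul_apply, Matrix.diagonal_apply, Finset.sum_ite_eq,
    ite_mul]

lemma trace_mul_con_le {T N : Matrix n n ℂ} (hT : T.PosSemidef) (hN : Con N) :
    ((T * N).trace).re ≤ T.trace.re := by
  set U := (hT.1.eigenvectorUnitary : Matrix n n ℂ) with hUdef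
  set d := hT.1.eigenvalues with hddef
  have htr : (T * N).trace =
      (Matrix.diagonal (fun i => ((d i : ℝ) : ℂ)) * (star U * N * U)).trace := by
    conv_lhs => rw [hT.1.spectral_theorem, Unitary.conjStarAlgAut_apply]
    rw [show (U * Matrix.diagonal (RCLike.ofReal ∘ d) * star U) * N =
      U * (Matrix.diagonal (RCLike.ofReal ∘ d) * (star U * N)) by simp only [Matrix.mul_assoc]]
    rw [Matrix.trace_mul_comm]
    congr 1
    simp only [Matrix.mul_assoc]
    rfl
  have hcon : Con (star U * N * U) := by
    rw [Matrix.star_eq_conjTranspose]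
    refine con_mul (con_mul (con_of_mul_eq_one ?_) hN) (con_of_mul_eq_one ?_)
    · rw [Matrix.conjTranspose_conjTranspose]
      rw [← Matrix.star_eq_conjTranspose]
      exact cd_mul_star hT
    · rw [← Matrix.star_eq_conjTranspose]
      exact cd_star_mul hT
  have htrT : T.trace.re = ∑ i, d i := by
    rw [← cd_id hT, cd_trace]
    simp [Complex.re_sum]
    rfl
  rw [htr, trace_diagonal_mul, htrT, Complex.re_sum]
  apply Finset.sum_le_sum
  intro i _
  rw [Complex.re_ofReal_mul]
  have h1 : ((star U * N * U) i i).re ≤ 1 := by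
    calc ((star U * N * U) i i).re ≤ ‖(star U * N * U) i i‖ := Complex.re_le_norm _
      _ ≤ 1 := con_diag_abs_le_one hcon i
  have h2 : 0 ≤ d i := hT.eigenvalues_nonneg i
  nlinarith

lemma trace_conj_dot (R S : Matrix m n ℂ) :
    (Rᴴ * S).trace = star (fun p : m × n => R p.1 p.2) ⬝ᵥ (fun p : m × n => S p.1 p.2) := by
  simp only [Matrix.trace, Matrix.diag, Matrix.mul_apply, Matrix.conjTranspose_apply,
    dotProduct, Fintype.sum_prod_type, Pi.star_apply]
  rw [Finset.sum_comm]

lemma trace_cs (P Q : Matrix m n ℂ) :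
    ‖(Pᴴ * Q).trace‖ ≤
      Real.sqrt ((Pᴴ * P).trace.re) * Real.sqrt ((Qᴴ * Q).trace.re) := by
  rw [trace_conj_dot P Q, trace_conj_dot P P, trace_conj_dot Q Q]
  exact dot_cs _ _

lemma msqrt_inner_eq {A B : Matrix n n ℂ} (hA : A.PosSemidef) (hB : B.PosSemidef) :
    (msqrt B * msqrt A)ᴴ * (msqrt B * msqrt A) = msqrt A * B * msqrt A := by
  rw [Matrix.conjTranspose_mul, msqrt_herm hA, msqrt_herm hB]
  rw [show msqrt A * msqrt B * (msqrt B * msqrt A) =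
    msqrt A * (msqrt B * msqrt B) * msqrt A by simp only [Matrix.mul_assoc]]
  rw [msqrt_mul_self hB]

/-- Uhlmann-type inequality -/
lemma uhlmann (P Q : Matrix m n ℂ) :
    ((Pᴴ * Q).trace).re ≤ gFid (Pᴴ * P) (Qᴴ * Q) := by
  set sA := msqrt (Pᴴ * P) with hsA
  set sB := msqrt (Qᴴ * Q) with hsB
  set C := sB * sA with hC
  set K := (Wpol P)ᴴ * Wpol Q with hK
  have hCC : Cᴴ * C = sA * (Qᴴ * Q) * sA :=
    msqrt_inner_eq (Matrix.posSemidef_conjTranspose_mul_self P)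
      (Matrix.posSemidef_conjTranspose_mul_self Q)
  have htr : (Pᴴ * Q).trace = (msqrt (Cᴴ * C) * (K * Wpol C)).trace := by
    conv_lhs => rw [← wpol_mul_msqrt P, ← wpol_mul_msqrt Q]
    rw [show (Wpol P * msqrt (Pᴴ*P))ᴴ * (Wpol Q * msqrt (Qᴴ*Q)) =
        sA * ((Wpol P)ᴴ * (Wpol Q * sB)) by
      rw [Matrix.conjTranspose_mul, msqrt_herm (Matrix.posSemidef_conjTranspose_mul_self P)]
      simp only [Matrix.mul_assoc, hsA, hsB]]
    rw [Matrix.trace_mul_comm]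
    rw [show (Wpol P)ᴴ * (Wpol Q * sB) * sA = K * C by simp only [Matrix.mul_assoc, hK, hC]]
    conv_lhs => rw [← wpol_mul_msqrt C]
    rw [show K * (Wpol C * msqrt (Cᴴ * C)) = (K * Wpol C) * msqrt (Cᴴ * C) by
      simp only [Matrix.mul_assoc]]
    rw [Matrix.trace_mul_comm]
  have hgoal : gFid (Pᴴ * P) (Qᴴ * Q) = (msqrt (Cᴴ * C)).trace.re := by
    unfold gFid
    rw [hCC]
  rw [htr, hgoal]
  exact trace_mul_con_le (msqrt_psd (Matrix.posSemidef_conjTranspose_mul_self C))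
    (con_mul (con_mul (con_conjTranspose (wpol_con P)) (wpol_con Q)) (wpol_con C))

/-- the fidelity of subnormalized states is at most the geometric mean of the traces -/
lemma gFid_le_sqrt_trace {A B : Matrix n n ℂ} (hA : A.PosSemidef) (hB : B.PosSemidef) :
    gFid A B ≤ Real.sqrt (A.trace.re) * Real.sqrt (B.trace.re) := by
  set sA := msqrt A with hsA
  set sB := msqrt B with hsB
  set C := sB * sA with hC
  set V := Wpol C with hV
  have hCC : Cᴴ * C = sA * B * sA := msqrt_inner_eq hA hB
  have h0 : gFid A B = (msqrt (Cᴴ * C)).trace.re := by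
    unfold gFid
    rw [hCC]
  have h1 : (msqrt (Cᴴ * C)).trace = (sAᴴ * (Vᴴ * sB)).trace := by
    rw [← wpol_conjTranspose_mul C]
    rw [show Vᴴ * C = (Vᴴ * sB) * sA by simp only [Matrix.mul_assoc, hC]]
    rw [Matrix.trace_mul_comm, msqrt_herm hA]
  have h2 : ((Vᴴ * sB)ᴴ * (Vᴴ * sB)).trace.re ≤ B.trace.re := by
    have hpsd : (sBᴴ * (1 - V * Vᴴ) * sB).PosSemidef := by
      have hconV : (1 - V * Vᴴ).PosSemidef := by
        have := con_conjTranspose (wpol_con C)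
        rwa [Con, Matrix.conjTranspose_conjTranspose] at this
      exact hconV.conjTranspose_mul_mul_same sB
    have hid : sBᴴ * (1 - V * Vᴴ) * sB = B - (Vᴴ * sB)ᴴ * (Vᴴ * sB) := by
      rw [Matrix.conjTranspose_mul, Matrix.conjTranspose_conjTranspose, Matrix.mul_sub,
        Matrix.sub_mul, Matrix.mul_one, msqrt_herm hB]
      rw [msqrt_mul_self hB]
      simp only [Matrix.mul_assoc, hsB]
    have := psd_trace_re_nonneg hpsd
    rw [hid, Matrix.trace_sub, Complex.sub_re] at this
    linarith
  have h3 : (sAᴴ * (Vᴴ * sB)).trace.re ≤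
      Real.sqrt ((sAᴴ * sA).trace.re) * Real.sqrt (((Vᴴ * sB)ᴴ * (Vᴴ * sB)).trace.re) := by
    calc (sAᴴ * (Vᴴ * sB)).trace.re ≤ ‖(sAᴴ * (Vᴴ * sB)).trace‖ := Complex.re_le_norm _
      _ ≤ _ := trace_cs _ _
  have h4 : (sAᴴ * sA).trace = A.trace := by rw [msqrt_herm hA, msqrt_mul_self hA]
  rw [h0, h1]
  calc (sAᴴ * (Vᴴ * sB)).trace.re
      ≤ Real.sqrt ((sAᴴ * sA).trace.re) * Real.sqrt (((Vᴴ * sB)ᴴ * (Vᴴ * sB)).trace.re) := h3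
    _ ≤ Real.sqrt (A.trace.re) * Real.sqrt (B.trace.re) := by
        rw [h4]
        exact mul_le_mul_of_nonneg_left (Real.sqrt_le_sqrt h2) (Real.sqrt_nonneg _)

end core

section blocks

lemma psd_blocks_diag {D : Matrix n n ℂ} (hD : D.PosSemidef) :
    (Matrix.fromBlocks (0 : Matrix n n ℂ) 0 0 D).PosSemidef := by
  refine Matrix.PosSemidef.of_dotProduct_mulVec_nonneg ?_ ?_
  · rw [Matrix.IsHermitian, Matrix.fromBlocks_conjTranspose]
    simp [hD.1.eq]
  · intro x
    simpa [dotProduct, Matrix.mulVec, Fintype.sum_sum_type] using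
      hD.dotProduct_mulVec_nonneg (fun i => x (Sum.inr i))

/-- Achievability: there is an off-diagonal block realizing the root fidelity. -/
lemma exists_block {A B : Matrix n n ℂ} (hA : A.PosSemidef) (hB : B.PosSemidef) :
    ∃ X : Matrix n n ℂ, (Matrix.fromBlocks A X Xᴴ B).PosSemidef ∧ X.trace.re = gFid A B := by
  set sA := msqrt A with hsA
  set sB := msqrt B with hsB
  set C := sB * sA with hC
  set V := Wpol C with hV
  set Y := Vᴴ * sB with hY
  refine ⟨sA * Y, ?_, ?_⟩
  · have hL : (Matrix.fromBlocks sA Y (0 : Matrix n n ℂ) 0)ᴴ *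
        (Matrix.fromBlocks sA Y (0 : Matrix n n ℂ) 0) =
        Matrix.fromBlocks A (sA * Y) (sA * Y)ᴴ (Yᴴ * Y) := by
      rw [Matrix.fromBlocks_conjTranspose, Matrix.fromBlocks_multiply]
      simp [Matrix.fromBlocks_inj, hsA, msqrt_herm hA, msqrt_mul_self hA, Matrix.conjTranspose_mul]
    have hsplit : Matrix.fromBlocks A (sA * Y) (sA * Y)ᴴ B =
        Matrix.fromBlocks A (sA * Y) (sA * Y)ᴴ (Yᴴ * Y) +
          Matrix.fromBlocks (0 : Matrix n n ℂ) 0 0 (B - Yᴴ * Y) := by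
      rw [Matrix.fromBlocks_add]
      simp
    have hBYY : (B - Yᴴ * Y).PosSemidef := by
      have hconV : (1 - V * Vᴴ).PosSemidef := by
        have := con_conjTranspose (wpol_con C)
        rwa [Con, Matrix.conjTranspose_conjTranspose] at this
      have hid : sBᴴ * (1 - V * Vᴴ) * sB = B - Yᴴ * Y := by
        rw [hY, Matrix.conjTranspose_mul, Matrix.conjTranspose_conjTranspose, Matrix.mul_sub,
          Matrix.sub_mul, Matrix.mul_one, msqrt_herm hB]
        rw [msqrt_mul_self hB]
        simp only [Matrix.mul_assoc, hsB]
      rw [← hid]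
      exact hconV.conjTranspose_mul_mul_same sB
    rw [hsplit, ← hL]
    exact (Matrix.posSemidef_conjTranspose_mul_self _).add (psd_blocks_diag hBYY)
  · have hCC : Cᴴ * C = sA * B * sA := msqrt_inner_eq hA hB
    have h1 : (msqrt (Cᴴ * C)).trace = (sA * Y).trace := by
      rw [← wpol_conjTranspose_mul C]
      rw [show Vᴴ * C = Y * sA by simp only [Matrix.mul_assoc, hC, hY]]
      rw [Matrix.trace_mul_comm]
    have h0 : gFid A B = (msqrt (Cᴴ * C)).trace.re := by
      unfold gFid
      rw [hCC]
    rw [h0, h1]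

/-- SDP upper bound: any feasible block gives a lower bound on the root fidelity. -/
lemma block_psd_trace_le {A X B : Matrix n n ℂ}
    (hM : (Matrix.fromBlocks A X Xᴴ B).PosSemidef) :
    X.trace.re ≤ gFid A B := by
  set N := msqrt (Matrix.fromBlocks A X Xᴴ B) with hN
  have hNN : N * N = Matrix.fromBlocks A X Xᴴ B := msqrt_mul_self hM
  have hNh : Nᴴ = N := msqrt_herm hM
  have hstar : ∀ i i', star (N i i') = N i' i := by
    intro i i'
    rw [← Matrix.conjTranspose_apply, hNh]
  set P : Matrix (n ⊕ n) n ℂ := Matrix.of (fun i j => N i (Sum.inl j)) with hP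
  set Q : Matrix (n ⊕ n) n ℂ := Matrix.of (fun i j => N i (Sum.inr j)) with hQ
  have hPP : Pᴴ * P = A := by
    ext j k
    calc (Pᴴ * P) j k = ∑ i, N (Sum.inl j) i * N i (Sum.inl k) := by
          simp [Matrix.mul_apply, Matrix.conjTranspose_apply, hP, hstar]
      _ = A j k := by
          have h3 : (N * N) (Sum.inl j) (Sum.inl k) =
              (Matrix.fromBlocks A X Xᴴ B) (Sum.inl j) (Sum.inl k) := by rw [hNN]
          simpa [Matrix.mul_apply] using h3
  have hQQ : Qᴴ * Q = B := by
    ext j k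
    calc (Qᴴ * Q) j k = ∑ i, N (Sum.inr j) i * N i (Sum.inr k) := by
          simp [Matrix.mul_apply, Matrix.conjTranspose_apply, hQ, hstar]
      _ = B j k := by
          have h3 : (N * N) (Sum.inr j) (Sum.inr k) =
              (Matrix.fromBlocks A X Xᴴ B) (Sum.inr j) (Sum.inr k) := by rw [hNN]
          simpa [Matrix.mul_apply] using h3
  have hPQ : Pᴴ * Q = X := by
    ext j k
    calc (Pᴴ * Q) j k = ∑ i, N (Sum.inl j) i * N i (Sum.inr k) := by
          simp [Matrix.mul_apply, Matrix.conjTranspose_apply, hP, hQ, hstar]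
      _ = X j k := by
          have h3 : (N * N) (Sum.inl j) (Sum.inr k) =
              (Matrix.fromBlocks A X Xᴴ B) (Sum.inl j) (Sum.inr k) := by rw [hNN]
          simpa [Matrix.mul_apply] using h3
  have := uhlmann P Q
  rw [hPP, hQQ, hPQ] at this
  exact this

end blocks

section kraus

variable {m : Type*} [Fintype m] [DecidableEq m]

lemma psd_sum {ι : Type*} (s : Finset ι) (f : ι → Matrix n n ℂ)
    (h : ∀ i ∈ s, (f i).PosSemidef) : (∑ i ∈ s, f i).PosSemidef := by
  refine Matrix.PosSemidef.of_dotProduct_mulVec_nonneg ?_ ?_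
  · rw [Matrix.IsHermitian, Matrix.conjTranspose_sum]
    exact Finset.sum_congr rfl fun i hi => (h i hi).1
  · intro x
    have hsum : (∑ i ∈ s, f i) *ᵥ x = ∑ i ∈ s, (f i *ᵥ x) :=
      map_sum (Matrix.mulVec.addMonoidHomLeft x) f s
    rw [hsum]
    have hdot : star x ⬝ᵥ (∑ i ∈ s, f i *ᵥ x) = ∑ i ∈ s, star x ⬝ᵥ (f i *ᵥ x) := by
      simp only [dotProduct, Finset.sum_apply, Finset.mul_sum]
      rw [Finset.sum_comm]
    rw [hdot]
    exact Finset.sum_nonneg fun i hi => (h i hi).dotProduct_mulVec_nonneg x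

lemma fromBlocks_sum {ι : Type*} (s : Finset ι) (fA : ι → Matrix n n ℂ)
    (fB : ι → Matrix n m ℂ) (fC : ι → Matrix m n ℂ) (fD : ι → Matrix m m ℂ) :
    ∑ i ∈ s, Matrix.fromBlocks (fA i) (fB i) (fC i) (fD i) =
      Matrix.fromBlocks (∑ i ∈ s, fA i) (∑ i ∈ s, fB i) (∑ i ∈ s, fC i) (∑ i ∈ s, fD i) := by
  ext p q
  cases p <;> cases q <;> simp [Matrix.sum_apply]

variable {k : ℕ} (K : Fin k → Matrix m n ℂ)

lemma kraus_trace (M : Matrix n n ℂ) :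
    (∑ i, K i * M * (K i)ᴴ).trace = (M * ∑ i, (K i)ᴴ * K i).trace := by
  rw [Matrix.trace_sum, Finset.mul_sum, Matrix.trace_sum]
  apply Finset.sum_congr rfl
  intro i _
  rw [Matrix.trace_mul_cycle, Matrix.trace_mul_comm]

lemma kraus_psd {M : Matrix n n ℂ} (hM : M.PosSemidef) :
    (∑ i, K i * M * (K i)ᴴ).PosSemidef :=
  psd_sum _ _ fun i _ => hM.mul_mul_conjTranspose_same (K i)

lemma kraus_conjTranspose (M : Matrix n n ℂ) :
    (∑ i, K i * M * (K i)ᴴ)ᴴ = ∑ i, K i * Mᴴ * (K i)ᴴ := by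
  rw [Matrix.conjTranspose_sum]
  apply Finset.sum_congr rfl
  intro i _
  simp only [Matrix.conjTranspose_mul, Matrix.conjTranspose_conjTranspose, Matrix.mul_assoc]

lemma kraus_blocks_psd {A X B : Matrix n n ℂ}
    (hM : (Matrix.fromBlocks A X Xᴴ B).PosSemidef) :
    (Matrix.fromBlocks (∑ i, K i * A * (K i)ᴴ) (∑ i, K i * X * (K i)ᴴ)
      (∑ i, K i * Xᴴ * (K i)ᴴ) (∑ i, K i * B * (K i)ᴴ)).PosSemidef := by
  have hGi : ∀ i : Fin k,
      (Matrix.fromBlocks (K i) (0 : Matrix m n ℂ) (0 : Matrix m n ℂ) (K i)) *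
        Matrix.fromBlocks A X Xᴴ B *
        (Matrix.fromBlocks (K i) (0 : Matrix m n ℂ) (0 : Matrix m n ℂ) (K i))ᴴ =
      Matrix.fromBlocks (K i * A * (K i)ᴴ) (K i * X * (K i)ᴴ)
        (K i * Xᴴ * (K i)ᴴ) (K i * B * (K i)ᴴ) := by
    intro i
    rw [Matrix.fromBlocks_conjTranspose, Matrix.fromBlocks_multiply, Matrix.fromBlocks_multiply]
    simp
  rw [← fromBlocks_sum]
  have : ∑ i, Matrix.fromBlocks (K i * A * (K i)ᴴ) (K i * X * (K i)ᴴ)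
      (K i * Xᴴ * (K i)ᴴ) (K i * B * (K i)ᴴ) =
      ∑ i, (Matrix.fromBlocks (K i) (0 : Matrix m n ℂ) (0 : Matrix m n ℂ) (K i)) *
        Matrix.fromBlocks A X Xᴴ B *
        (Matrix.fromBlocks (K i) (0 : Matrix m n ℂ) (0 : Matrix m n ℂ) (K i))ᴴ := by
    exact Finset.sum_congr rfl fun i _ => (hGi i).symm
  rw [this]
  exact psd_sum _ _ fun i _ => hM.mul_mul_conjTranspose_same _

end kraus

end EPI

/-- Extended processing inequality for the sine distance under CPTD maps. -/
theorem extended_processing_inequality_sine {m n : ℕ}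
    (E : Matrix (Fin m) (Fin m) ℂ →ₗ[ℂ] Matrix (Fin n) (Fin n) ℂ) (hE : IsCPTD E)
    (ρ σ : Matrix (Fin m) (Fin m) ℂ) (hρ : IsDensity ρ) (hσ : IsDensity σ)
    (htρ : 0 < tr' (E ρ)) (htσ : 0 < tr' (E σ)) :
    tr' (E ρ) * sineDist (nstate (E ρ)) (nstate (E σ)) ≤ sineDist ρ σ := by
  obtain ⟨k, K, hKr, hKtd⟩ := hE
  set S : Matrix (Fin m) (Fin m) ℂ := ∑ i, (K i)ᴴ * K i with hS
  set R : Matrix (Fin m) (Fin m) ℂ := 1 - S with hR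
  have hRpsd : R.PosSemidef := hKtd
  have hρp := hρ.1
  have hσp := hσ.1
  set t : ℝ := tr' (E ρ) with ht
  set t' : ℝ := tr' (E σ) with ht'
  have hEρpsd : (E ρ).PosSemidef := by rw [hKr ρ]; exact EPI.kraus_psd K hρp
  have hEσpsd : (E σ).PosSemidef := by rw [hKr σ]; exact EPI.kraus_psd K hσp
  have htrE : ∀ M : Matrix (Fin m) (Fin m) ℂ, (E M).trace = (M * S).trace := by
    intro M
    rw [hKr M]
    exact EPI.kraus_trace K M
  have htρre : (E ρ).trace.re = t := by rw [ht]; rfl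
  have htσre : (E σ).trace.re = t' := by rw [ht']; rfl
  have htρS : (ρ * S).trace.re = t := by rw [← htrE ρ]; exact htρre
  have htσS : (σ * S).trace.re = t' := by rw [← htrE σ]; exact htσre
  -- normalized states
  have hρ' : nstate (E ρ) = ((t⁻¹ : ℝ) : ℂ) • E ρ := by
    unfold nstate
    rw [← ht, Complex.ofReal_inv]
  have hσ' : nstate (E σ) = ((t'⁻¹ : ℝ) : ℂ) • E σ := by
    unfold nstate
    rw [← ht', Complex.ofReal_inv]
  have hρ'psd : (nstate (E ρ)).PosSemidef := by
    rw [hρ']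
    exact EPI.psd_smul (inv_nonneg.mpr htρ.le) hEρpsd
  have hσ'psd : (nstate (E σ)).PosSemidef := by
    rw [hσ']
    exact EPI.psd_smul (inv_nonneg.mpr htσ.le) hEσpsd
  have hρ'tr : (nstate (E ρ)).trace.re = 1 := by
    rw [hρ', Matrix.trace_smul, smul_eq_mul, Complex.re_ofReal_mul, htρre]
    exact inv_mul_cancel₀ (ne_of_gt htρ)
  have hσ'tr : (nstate (E σ)).trace.re = 1 := by
    rw [hσ', Matrix.trace_smul, smul_eq_mul, Complex.re_ofReal_mul, htσre]
    exact inv_mul_cancel₀ (ne_of_gt htσ)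
  set f : ℝ := EPI.gFid (nstate (E ρ)) (nstate (E σ)) with hf
  set g : ℝ := EPI.gFid ρ σ with hg
  -- achievable block for (ρ, σ)
  obtain ⟨X, hXpsd, hXtr⟩ := EPI.exists_block hρp hσp
  -- scaling
  have hscale : EPI.gFid (E ρ) (E σ) = Real.sqrt t * Real.sqrt t' * f := by
    have h1 : E ρ = ((t : ℝ) : ℂ) • nstate (E ρ) := by
      rw [hρ', smul_smul, ← Complex.ofReal_mul, mul_inv_cancel₀ (ne_of_gt htρ),
        Complex.ofReal_one, one_smul]
    have h2 : E σ = ((t' : ℝ) : ℂ) • nstate (E σ) := by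
      rw [hσ', smul_smul, ← Complex.ofReal_mul, mul_inv_cancel₀ (ne_of_gt htσ),
        Complex.ofReal_one, one_smul]
    conv_lhs => rw [h1, h2]
    rw [EPI.gFid_smul htρ.le htσ.le hρ'psd hσ'psd]
  -- bound 1 : the S part
  have hb1 : (X * S).trace.re ≤ Real.sqrt t * Real.sqrt t' * f := by
    have hXconj := EPI.kraus_blocks_psd K hXpsd
    have e1 : ∑ i, K i * ρ * (K i)ᴴ = E ρ := (hKr ρ).symm
    have e2 : ∑ i, K i * X * (K i)ᴴ = E X := (hKr X).symm
    have e4 : ∑ i, K i * σ * (K i)ᴴ = E σ := (hKr σ).symm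
    have e3 : ∑ i, K i * Xᴴ * (K i)ᴴ = (E X)ᴴ := by
      rw [hKr X, EPI.kraus_conjTranspose]
    rw [e1, e2, e3, e4] at hXconj
    have hB := EPI.block_psd_trace_le hXconj
    have hEX : (E X).trace = (X * S).trace := htrE X
    rw [hEX, hscale] at hB
    exact hB
  -- bound 2 : the R part
  set sR : Matrix (Fin m) (Fin m) ℂ := msqrt R with hsRdef
  have hsρ : (sR * ρ * sR).PosSemidef := by
    have := hρp.conjTranspose_mul_mul_same sR
    rwa [EPI.msqrt_herm hRpsd] at this
  have hsσ : (sR * σ * sR).PosSemidef := by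
    have := hσp.conjTranspose_mul_mul_same sR
    rwa [EPI.msqrt_herm hRpsd] at this
  have hcycρ : (sR * ρ * sR).trace = (ρ * R).trace := by
    rw [Matrix.trace_mul_cycle, EPI.msqrt_mul_self hRpsd, Matrix.trace_mul_comm]
  have hcycσ : (sR * σ * sR).trace = (σ * R).trace := by
    rw [Matrix.trace_mul_cycle, EPI.msqrt_mul_self hRpsd, Matrix.trace_mul_comm]
  have hρR : (ρ * R).trace.re = 1 - t := by
    rw [hR, Matrix.mul_sub, Matrix.mul_one, Matrix.trace_sub, Complex.sub_re, hρ.2, htρS]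
    simp
  have hσR : (σ * R).trace.re = 1 - t' := by
    rw [hR, Matrix.mul_sub, Matrix.mul_one, Matrix.trace_sub, Complex.sub_re, hσ.2, htσS]
    simp
  have h1t : 0 ≤ 1 - t := by
    have := EPI.psd_trace_re_nonneg hsρ
    rwa [hcycρ, hρR] at this
  have h1t' : 0 ≤ 1 - t' := by
    have := EPI.psd_trace_re_nonneg hsσ
    rwa [hcycσ, hσR] at this
  have hb2 : (X * R).trace.re ≤ Real.sqrt (1 - t) * Real.sqrt (1 - t') := by
    have hHc : (Matrix.fromBlocks sR 0 0 sR) * Matrix.fromBlocks ρ X Xᴴ σ *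
        (Matrix.fromBlocks sR 0 0 sR)ᴴ =
        Matrix.fromBlocks (sR * ρ * sR) (sR * X * sR) (sR * X * sR)ᴴ (sR * σ * sR) := by
      rw [Matrix.fromBlocks_conjTranspose, Matrix.fromBlocks_multiply,
        Matrix.fromBlocks_multiply]
      simp [Matrix.fromBlocks_inj, hsRdef, EPI.msqrt_herm hRpsd, Matrix.conjTranspose_mul,
        Matrix.mul_assoc]
    have hconj := hXpsd.mul_mul_conjTranspose_same (Matrix.fromBlocks sR 0 0 sR)
    rw [hHc] at hconj
    have hB := EPI.block_psd_trace_le hconj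
    have hXR : (sR * X * sR).trace = (X * R).trace := by
      rw [Matrix.trace_mul_cycle, EPI.msqrt_mul_self hRpsd, Matrix.trace_mul_comm]
    rw [hXR] at hB
    calc (X * R).trace.re ≤ EPI.gFid (sR * ρ * sR) (sR * σ * sR) := hB
      _ ≤ Real.sqrt ((sR * ρ * sR).trace.re) * Real.sqrt ((sR * σ * sR).trace.re) :=
          EPI.gFid_le_sqrt_trace hsρ hsσ
      _ = Real.sqrt (1 - t) * Real.sqrt (1 - t') := by rw [hcycρ, hρR, hcycσ, hσR]
  -- combine
  have hsplit : X.trace.re = (X * S).trace.re + (X * R).trace.re := by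
    have hXX : X * S + X * R = X := by
      rw [← Matrix.mul_add, hR]
      simp
    conv_lhs => rw [← hXX]
    rw [Matrix.trace_add, Complex.add_re]
  have hmain : g ≤ Real.sqrt t * Real.sqrt t' * f + Real.sqrt (1 - t) * Real.sqrt (1 - t') := by
    rw [hg, ← hXtr, hsplit]
    exact add_le_add hb1 hb2
  -- scalar facts
  have hf0 : 0 ≤ f := EPI.gFid_nonneg hρ'psd hσ'psd
  have hf1 : f ≤ 1 := by
    have := EPI.gFid_le_sqrt_trace hρ'psd hσ'psd
    rw [hρ'tr, hσ'tr] at this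
    simpa using this
  have hg0 : 0 ≤ g := EPI.gFid_nonneg hρp hσp
  have ht1 : t ≤ 1 := by linarith
  -- endgame
  have hsd1 : sineDist (nstate (E ρ)) (nstate (E σ)) = Real.sqrt (1 - f ^ 2) := by
    rw [sineDist, EPI.fid_eq_gFid_sq, ← hf]
  have hsd2 : sineDist ρ σ = Real.sqrt (1 - g ^ 2) := by
    rw [sineDist, EPI.fid_eq_gFid_sq, ← hg]
  rw [hsd1, hsd2]
  clear hsd1 hsd2 hXtr hXpsd hb1 hb2 hsplit hscale hρ'tr hσ'tr hρ'psd hσ'psd hρ' hσ'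
    hρR hσR hcycρ hcycσ hsρ hsσ hsRdef htρS htσS htρre htσre htrE hEρpsd hEσpsd hKr
  clear_value t t' f g
  have hkey : g ^ 2 ≤ 1 - t * (1 - f ^ 2) := by
    have haa := Real.mul_self_sqrt htρ.le
    have hbb := Real.mul_self_sqrt htσ.le
    have hcc := Real.mul_self_sqrt h1t
    have hdd := Real.mul_self_sqrt h1t'
    have hrhs0 : 0 ≤ Real.sqrt t * Real.sqrt t' * f + Real.sqrt (1 - t) * Real.sqrt (1 - t') :=
      add_nonneg (mul_nonneg (mul_nonneg (Real.sqrt_nonneg _) (Real.sqrt_nonneg _)) hf0)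
        (mul_nonneg (Real.sqrt_nonneg _) (Real.sqrt_nonneg _))
    have hsq : g ^ 2 ≤
        (Real.sqrt t * Real.sqrt t' * f + Real.sqrt (1 - t) * Real.sqrt (1 - t')) ^ 2 := by
      nlinarith [hmain, hg0, hrhs0]
    have hcs2 : (Real.sqrt t * Real.sqrt t' * f + Real.sqrt (1 - t) * Real.sqrt (1 - t')) ^ 2 ≤
        (Real.sqrt t * Real.sqrt t * f * f + Real.sqrt (1 - t) * Real.sqrt (1 - t)) *
          (Real.sqrt t' * Real.sqrt t' + Real.sqrt (1 - t') * Real.sqrt (1 - t')) := by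
      nlinarith [sq_nonneg (Real.sqrt t * f * Real.sqrt (1 - t') -
        Real.sqrt (1 - t) * Real.sqrt t')]
    have hfin : (Real.sqrt t * Real.sqrt t * f * f + Real.sqrt (1 - t) * Real.sqrt (1 - t)) *
        (Real.sqrt t' * Real.sqrt t' + Real.sqrt (1 - t') * Real.sqrt (1 - t')) =
        1 - t * (1 - f ^ 2) := by
      rw [haa, hbb, hcc, hdd]
      ring
    linarith
  calc t * Real.sqrt (1 - f ^ 2) = Real.sqrt (t ^ 2 * (1 - f ^ 2)) := by
        rw [Real.sqrt_mul (sq_nonneg t), Real.sqrt_sq htρ.le]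
    _ ≤ Real.sqrt (1 - g ^ 2) := by
        apply Real.sqrt_le_sqrt
        have hff : 0 ≤ 1 - f ^ 2 := by nlinarith
        have htt : t ^ 2 ≤ t := by nlinarith
        nlinarith [mul_le_mul_of_nonneg_right htt hff, hkey]
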